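/- Let G be an index coding instance on n ≥ 1 messages. If G is critical, then for every edge e of G that does not belong to any unicycle of G, the MAIS outer bound is not tight for G_e: ℛ_MAIS(G_e) ≠ 𝒞(G_e). -/

import Mathlib

namespace IC

/-- A `(t, r)` index code (with per-message lengths `t j` bits and index length
`r` bits) exists for the directed graph with edge relation `E` on vertex set `V`:
there are an encoder `φ` and, for each node `j`, a decoder `ψ j` that recovers
message `x j` from the index `φ x` and the side information `(x i)_{i ∈ A_j}`. -/
def HasCode {V : Type*} (E : V → V → Prop) (t : V → ℕ) (r : ℕ) : Prop :=
  ∃ (φ : (∀ j : V, Fin (t j) → Fin 2) → (Fin r → Fin 2))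
    (ψ : ∀ j : V, (Fin r → Fin 2) → (∀ i : {i : V // E i j}, Fin (t i.1) → Fin 2) →
      (Fin (t j) → Fin 2)),
    ∀ (x : ∀ j : V, Fin (t j) → Fin 2) (j : V),
      ψ j (φ x) (fun i => x i.1) = x j

/-- The broadcast rate `β = inf { r/t : a (t, r) index code exists }`. -/
noncomputable def broadcastRate {V : Type*} (E : V → V → Prop) : ℝ :=
  sInf {ρ : ℝ | ∃ (t r : ℕ), 1 ≤ t ∧ HasCode E (fun _ => t) r ∧ ρ = (r : ℝ) / t}

end IC
namespace IC

/-- A rate tuple `R` is achievable: it is nonnegative and there is a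
`(t_1, …, t_n, r)` index code with `R j ≤ t j / r` for all `j`. -/
def Achievable {n : ℕ} (E : Fin n → Fin n → Prop) (R : Fin n → ℝ) : Prop :=
  (∀ j, 0 ≤ R j) ∧
  ∃ (t : Fin n → ℕ) (r : ℕ), (∀ j, 1 ≤ t j) ∧ 1 ≤ r ∧ HasCode E t r ∧
    ∀ j, R j ≤ (t j : ℝ) / r

/-- The capacity region `𝒞(G)`: the closure of the set of achievable rate tuples. -/
noncomputable def capacityRegion {n : ℕ} (E : Fin n → Fin n → Prop) : Set (Fin n → ℝ) :=
  closure {R | Achievable E R}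

end IC
namespace IC

/-- The graph obtained by removing the edge `(a, b)`. -/
def removeEdge {V : Type*} (E : V → V → Prop) (a b : V) : V → V → Prop :=
  fun x y => E x y ∧ ¬(x = a ∧ y = b)

/-- The subgraph induced on `S` contains a directed cycle. -/
def HasCycleIn {V : Type*} (E : V → V → Prop) (S : Set V) : Prop :=
  ∃ (m : ℕ) (v : Fin (m + 2) → V), Function.Injective v ∧ (∀ i, v i ∈ S) ∧
    ∀ i, E (v i) (v (i + 1))

/-- The MAIS outer bound region `ℛ_MAIS(G)`. -/
def maisRegion {n : ℕ} (E : Fin n → Fin n → Prop) : Set (Fin n → ℝ) :=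
  {R | (∀ j, 0 ≤ R j) ∧
    ∀ S : Finset (Fin n), ¬ HasCycleIn E ↑S → ∑ j ∈ S, R j ≤ 1}

/-- The subgraph induced on `S` is a unicycle: `|S| ≥ 2` and `S` admits an
enumeration `v_0, …, v_{m−1}` such that the edges of the induced subgraph are
exactly the directed Hamiltonian cycle `v_0 → v_1 → ⋯ → v_{m−1} → v_0`. -/
def IsUnicycle {V : Type*} (E : V → V → Prop) (S : Set V) : Prop :=
  ∃ (m : ℕ) (v : Fin (m + 2) → V), Function.Injective v ∧ Set.range v = S ∧
    ∀ a b, a ∈ S → b ∈ S → (E a b ↔ ∃ i, v i = a ∧ v (i + 1) = b)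

/-- The edge `(x, y)` belongs to a unicycle of the graph. -/
def InUnicycle {V : Type*} (E : V → V → Prop) (x y : V) : Prop :=
  E x y ∧ ∃ S : Set V, IsUnicycle E S ∧ x ∈ S ∧ y ∈ S

end IC

section AuxIC

open Fin.CommRing in
/-- A closed walk (not necessarily injective) yields a unicycle inside `S`. -/
lemma aux_core {V : Type*} {E : V → V → Prop} {S : Set V}
    (hself : ∀ a, ¬ E a a)
    (h : ∃ m : ℕ, ∃ v : Fin (m + 2) → V, (∀ i, v i ∈ S) ∧ ∀ i, E (v i) (v (i + 1))) :
    ∃ T : Set V, T ⊆ S ∧ IC.IsUnicycle E T := by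
  classical
  obtain ⟨m, ⟨v, hvS, hvE⟩, hmin⟩ :
      ∃ m : ℕ, (∃ v : Fin (m + 2) → V, (∀ i, v i ∈ S) ∧ ∀ i, E (v i) (v (i + 1))) ∧
        ∀ k, k < m → ¬ ∃ v : Fin (k + 2) → V, (∀ i, v i ∈ S) ∧ ∀ i, E (v i) (v (i + 1)) :=
    ⟨Nat.find h, Nat.find_spec h, fun k hk => Nat.find_min h hk⟩
  have chord : ∀ p q : Fin (m + 2), E (v p) (v q) → q = p + 1 := by
    intro p q hpq
    by_contra hne
    have hpqne : p ≠ q := by rintro rfl; exact hself _ hpq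
    set d : Fin (m + 2) := p - q with hd
    have hd0 : d ≠ 0 := sub_ne_zero_of_ne hpqne
    have hd1 : 1 ≤ d.val := by
      rcases Nat.eq_zero_or_pos d.val with h0 | h0
      · exact absurd (Fin.ext h0) hd0
      · exact h0
    have hdlt : d.val < m + 2 := d.isLt
    have hdm : d.val ≤ m := by
      by_contra hgt
      have hval : d.val = m + 1 := by omega
      have hz : d + 1 = 0 := by
        apply Fin.ext
        rw [Fin.val_add, Fin.val_one, hval]
        simp
      rw [hd] at hz
      exact hne (by linear_combination -hz)
    refine hmin (d.val - 1) (by omega) ⟨fun i => v (q + ((i : ℕ) : Fin (m + 2))),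
      fun i => hvS _, fun i => ?_⟩
    show E (v (q + ((i : ℕ) : Fin (m + 2))))
      (v (q + (((i + 1 : Fin (d.val - 1 + 2)) : ℕ) : Fin (m + 2))))
    by_cases hi : (i : ℕ) = d.val - 1 + 1
    · have hlast : i = Fin.last (d.val - 1 + 1) := Fin.ext (by simpa using hi)
      have h2 : i + 1 = 0 := by rw [hlast]; exact Fin.last_add_one _
      rw [h2, hi]
      have hdd : ((d.val - 1 + 1 : ℕ) : Fin (m + 2)) = d := by
        rw [show d.val - 1 + 1 = d.val by omega]
        exact Fin.cast_val_eq_self d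
      rw [hdd]
      have hqd : q + d = p := by rw [hd]; ring
      rw [hqd]
      simpa using hpq
    · have hlt : (i : ℕ) < d.val - 1 + 1 := by have := i.isLt; omega
      have h2 : ((i + 1 : Fin (d.val - 1 + 2)) : ℕ) = (i : ℕ) + 1 :=
        Fin.val_add_one_of_lt (by rw [Fin.lt_iff_val_lt_val, Fin.val_last]; exact hlt)
      rw [h2]
      have h3 : (((i : ℕ) + 1 : ℕ) : Fin (m + 2)) = ((i : ℕ) : Fin (m + 2)) + 1 := by
        push_cast; ring
      rw [h3, ← add_assoc]
      exact hvE _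
  have hinj : Function.Injective v := by
    intro p q hpq
    have h1 : E (v q) (v (p + 1)) := by rw [← hpq]; exact hvE p
    exact add_right_cancel (chord q (p + 1) h1)
  refine ⟨Set.range v, ?_, m, v, hinj, rfl, ?_⟩
  · rintro _ ⟨i, rfl⟩; exact hvS i
  · intro a b ha hb
    constructor
    · intro hab
      obtain ⟨p, rfl⟩ := ha
      obtain ⟨q, rfl⟩ := hb
      exact ⟨p, rfl, by rw [chord p q hab]⟩
    · rintro ⟨i, rfl, rfl⟩; exact hvE i

lemma aux_hasCycle_of_unicycle {V : Type*} {E : V → V → Prop} {T S : Set V}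
    (hTS : T ⊆ S) (hu : IC.IsUnicycle E T) : IC.HasCycleIn E S := by
  obtain ⟨m, v, hinj, hrange, hiff⟩ := hu
  refine ⟨m, v, hinj, fun i => hTS (by rw [← hrange]; exact Set.mem_range_self i), fun i => ?_⟩
  exact (hiff _ _ (by rw [← hrange]; exact Set.mem_range_self i)
    (by rw [← hrange]; exact Set.mem_range_self (i + 1))).2 ⟨i, rfl, rfl⟩

lemma aux_hasCycle_of_walk {V : Type*} {E : V → V → Prop} {S : Set V}
    (hself : ∀ a, ¬ E a a)
    (h : ∃ m : ℕ, ∃ v : Fin (m + 2) → V, (∀ i, v i ∈ S) ∧ ∀ i, E (v i) (v (i + 1))) :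
    IC.HasCycleIn E S := by
  obtain ⟨T, hTS, hu⟩ := aux_core hself h
  exact aux_hasCycle_of_unicycle hTS hu

lemma aux_hc_mono {V : Type*} {E : V → V → Prop} {S₁ S₂ : Set V} (h : S₁ ⊆ S₂) :
    IC.HasCycleIn E S₁ → IC.HasCycleIn E S₂ := by
  rintro ⟨m, v, hinj, hmem, hedge⟩
  exact ⟨m, v, hinj, fun i => h (hmem i), hedge⟩

lemma aux_source {n : ℕ} {E : Fin n → Fin n → Prop} (hself : ∀ a, ¬ E a a)
    {S : Finset (Fin n)} (hS : ¬ IC.HasCycleIn E ↑S) (hne : S.Nonempty) :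
    ∃ j ∈ S, ∀ i ∈ S, ¬ E i j := by
  classical
  by_contra hcon
  push_neg at hcon
  have hfun : ∀ j : {j // j ∈ S}, ∃ i : {i // i ∈ S}, E i.1 j.1 := by
    intro j
    obtain ⟨i, hi, hEi⟩ := hcon j.1 j.2
    exact ⟨⟨i, hi⟩, hEi⟩
  choose f hf using hfun
  obtain ⟨j0, hj0⟩ := hne
  set g : ℕ → {j // j ∈ S} := fun k => f^[k] ⟨j0, hj0⟩ with hg
  have hgsucc : ∀ k, g (k + 1) = f (g k) := by
    intro k; simp only [hg]; exact Function.iterate_succ_apply' f k _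
  obtain ⟨a', b', hne', hab'⟩ := Finite.exists_ne_map_eq_of_infinite g
  obtain ⟨a, b, hlt, hab⟩ : ∃ a b : ℕ, a < b ∧ g a = g b := by
    rcases hne'.lt_or_gt with hl | hl
    · exact ⟨a', b', hl, hab'⟩
    · exact ⟨b', a', hl, hab'.symm⟩
  apply hS
  by_cases hL : b - a = 1
  · exfalso
    have hb : b = a + 1 := by omega
    have h1 := hf (g a)
    have h2 : f (g a) = g a := by rw [← hgsucc, ← hb, ← hab]
    rw [h2] at h1
    exact hself _ h1
  · have hL2 : 2 ≤ b - a := by omega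
    apply aux_hasCycle_of_walk hself
    refine ⟨b - a - 2, fun i => (g (b - (i : ℕ))).1,
      fun i => Finset.mem_coe.2 (g _).2, fun i => ?_⟩
    show E (g (b - (i : ℕ))).1 (g (b - ((i + 1 : Fin (b - a - 2 + 2)) : ℕ))).1
    by_cases hi : (i : ℕ) = b - a - 2 + 1
    · have hlast : i = Fin.last (b - a - 2 + 1) := Fin.ext (by simpa using hi)
      have h2 : i + 1 = 0 := by rw [hlast]; exact Fin.last_add_one _
      rw [h2, hi]
      rw [show ((0 : Fin (b - a - 2 + 2)) : ℕ) = 0 from rfl, Nat.sub_zero,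
        show b - (b - a - 2 + 1) = a + 1 by omega, ← hab, hgsucc]
      exact hf _
    · have hlt' : (i : ℕ) < b - a - 2 + 1 := by have := i.isLt; omega
      have h2 : ((i + 1 : Fin (b - a - 2 + 2)) : ℕ) = (i : ℕ) + 1 :=
        Fin.val_add_one_of_lt (by rw [Fin.lt_iff_val_lt_val, Fin.val_last]; exact hlt')
      rw [h2, show b - (i : ℕ) = (b - ((i : ℕ) + 1)) + 1 by omega, hgsucc]
      exact hf _

lemma aux_decode {n : ℕ} {E : Fin n → Fin n → Prop} (hself : ∀ a, ¬ E a a)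
    {t : Fin n → ℕ} {r : ℕ}
    (φ : (∀ j, Fin (t j) → Fin 2) → Fin r → Fin 2)
    (ψ : ∀ j, (Fin r → Fin 2) → (∀ i : {i // E i j}, Fin (t i.1) → Fin 2) → Fin (t j) → Fin 2)
    (hcode : ∀ x j, ψ j (φ x) (fun i => x i.1) = x j) :
    ∀ S : Finset (Fin n), ¬ IC.HasCycleIn E ↑S →
      ∀ x x', φ x = φ x' → (∀ i, i ∉ S → x i = x' i) → x = x' := by
  intro S
  induction S using Finset.strongInduction with
  | _ S IH =>
    intro hS x x' hφ hout
    rcases S.eq_empty_or_nonempty with rfl | hne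
    · funext j; exact hout j (by simp)
    obtain ⟨j, hjS, hsrc⟩ := aux_source hself hS hne
    have hside : (fun i : {i // E i j} => x i.1) = fun i : {i // E i j} => x' i.1 := by
      funext i
      exact hout i.1 (fun hiS => hsrc i.1 hiS i.2)
    have hxj : x j = x' j := by
      rw [← hcode x j, ← hcode x' j, hφ, hside]
    refine IH (S.erase j) (Finset.erase_ssubset hjS) ?_ x x' hφ ?_
    · intro hc
      exact hS (aux_hc_mono (Finset.coe_subset.2 (Finset.erase_subset _ _)) hc)
    · intro i hi
      by_cases hij : i = j
      · subst hij; exact hxj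
      · exact hout i (fun hiS => hi (Finset.mem_erase.2 ⟨hij, hiS⟩))

lemma aux_sum_le {n : ℕ} {E : Fin n → Fin n → Prop} (hself : ∀ a, ¬ E a a)
    {t : Fin n → ℕ} {r : ℕ} (hcode : IC.HasCode E t r)
    (S : Finset (Fin n)) (hS : ¬ IC.HasCycleIn E ↑S) :
    ∑ j ∈ S, t j ≤ r := by
  classical
  obtain ⟨φ, ψ, h⟩ := hcode
  set ext : (∀ j : {j // j ∈ S}, Fin (t j.1) → Fin 2) → (∀ j, Fin (t j) → Fin 2) :=
    fun y j => if hj : j ∈ S then y ⟨j, hj⟩ else fun _ => 0 with hext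
  have hinj : Function.Injective (fun y => φ (ext y)) := by
    intro y y' hyy
    have hxx := aux_decode hself φ ψ h S hS (ext y) (ext y') hyy
      (fun i hi => by simp [hext, hi])
    funext j
    have h2 := congrFun hxx j.1
    simpa [hext, j.2] using h2
  have hcard := Fintype.card_le_of_injective _ hinj
  have c1 : Fintype.card (∀ j : {j // j ∈ S}, Fin (t j.1) → Fin 2) = 2 ^ ∑ j ∈ S, t j := by
    rw [Fintype.card_pi]
    have heach : ∀ j : {j // j ∈ S}, Fintype.card (Fin (t j.1) → Fin 2) = 2 ^ t j.1 := by
      intro j; rw [Fintype.card_fun, Fintype.card_fin, Fintype.card_fin]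
    rw [Finset.prod_congr rfl (fun j _ => heach j), Finset.prod_pow_eq_pow_sum]
    congr 1
    exact Finset.sum_coe_sort S t
  have c2 : Fintype.card (Fin r → Fin 2) = 2 ^ r := by
    rw [Fintype.card_fun, Fintype.card_fin, Fintype.card_fin]
  rw [c1, c2] at hcard
  exact (Nat.pow_le_pow_iff_right (by norm_num)).1 hcard

lemma aux_mais_closed {n : ℕ} (E : Fin n → Fin n → Prop) : IsClosed (IC.maisRegion E) := by
  have hset : IC.maisRegion E =
      (⋂ j, {R : Fin n → ℝ | 0 ≤ R j}) ∩
      ⋂ (S : Finset (Fin n)) (_ : ¬ IC.HasCycleIn E ↑S), {R : Fin n → ℝ | ∑ j ∈ S, R j ≤ 1} := by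
    ext R
    simp [IC.maisRegion, Set.mem_iInter]
  rw [hset]
  refine IsClosed.inter (isClosed_iInter fun j => ?_)
    (isClosed_iInter fun S => isClosed_iInter fun _ => ?_)
  · exact isClosed_le continuous_const (continuous_apply j)
  · exact isClosed_le (continuous_finset_sum _ fun i _ => continuous_apply i) continuous_const

lemma aux_cap_sub_mais {n : ℕ} {E : Fin n → Fin n → Prop} (hself : ∀ a, ¬ E a a) :
    IC.capacityRegion E ⊆ IC.maisRegion E := by
  refine closure_minimal ?_ (aux_mais_closed E)
  rintro R ⟨hR0, t, r, ht, hr, hcode, hRt⟩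
  refine ⟨hR0, fun S hS => ?_⟩
  have key : ∑ j ∈ S, t j ≤ r := aux_sum_le hself hcode S hS
  have hrpos : (0 : ℝ) < r := by exact_mod_cast hr
  calc ∑ j ∈ S, R j ≤ ∑ j ∈ S, (t j : ℝ) / r := Finset.sum_le_sum fun j _ => hRt j
    _ = (∑ j ∈ S, (t j : ℝ)) / r := by rw [Finset.sum_div]
    _ ≤ 1 := by rw [div_le_one hrpos]; exact_mod_cast key

lemma aux_cap_mono {n : ℕ} {E E' : Fin n → Fin n → Prop} (h : ∀ a b, E' a b → E a b) :
    IC.capacityRegion E' ⊆ IC.capacityRegion E := by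
  apply closure_mono
  rintro R ⟨hR0, t, r, ht, hr, ⟨φ, ψ, hψ⟩, hRt⟩
  exact ⟨hR0, t, r, ht, hr,
    ⟨φ, fun j c s => ψ j c (fun i => s ⟨i.1, h _ _ i.2⟩), fun x j => hψ x j⟩, hRt⟩

lemma aux_hc_iff {n : ℕ} {E : Fin n → Fin n → Prop} (hself : ∀ a, ¬ E a a) {x y : Fin n}
    (hxy : E x y) (hnu : ¬ IC.InUnicycle E x y) (S : Finset (Fin n)) :
    IC.HasCycleIn E ↑S ↔ IC.HasCycleIn (IC.removeEdge E x y) ↑S := by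
  constructor
  · rintro ⟨m, v, hinj, hmem, hedge⟩
    obtain ⟨T, hTS, hu⟩ := aux_core hself ⟨m, v, hmem, hedge⟩
    obtain ⟨m', v', hinj', hrange', hiff'⟩ := hu
    by_cases hin : ∃ i, v' i = x ∧ v' (i + 1) = y
    · exfalso
      apply hnu
      obtain ⟨i, hix, hiy⟩ := hin
      exact ⟨hxy, T, ⟨m', v', hinj', hrange', hiff'⟩,
        by rw [← hrange']; exact ⟨i, hix⟩, by rw [← hrange']; exact ⟨i + 1, hiy⟩⟩
    · refine ⟨m', v', hinj', fun i => hTS (by rw [← hrange']; exact Set.mem_range_self i),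
        fun i => ⟨?_, fun hc => hin ⟨i, hc.1, hc.2⟩⟩⟩
      exact (hiff' _ _ (by rw [← hrange']; exact Set.mem_range_self i)
        (by rw [← hrange']; exact Set.mem_range_self (i + 1))).2 ⟨i, rfl, rfl⟩
  · rintro ⟨m, v, hinj, hmem, hedge⟩
    exact ⟨m, v, hinj, hmem, fun i => (hedge i).1⟩

lemma aux_mais_eq {n : ℕ} {E : Fin n → Fin n → Prop} (hself : ∀ a, ¬ E a a) {x y : Fin n}
    (hxy : E x y) (hnu : ¬ IC.InUnicycle E x y) :
    IC.maisRegion (IC.removeEdge E x y) = IC.maisRegion E := by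
  ext R
  simp only [IC.maisRegion, Set.mem_setOf_eq]
  constructor
  · rintro ⟨h0, h1⟩
    exact ⟨h0, fun S hS => h1 S (fun hc => hS ((aux_hc_iff hself hxy hnu S).2 hc))⟩
  · rintro ⟨h0, h1⟩
    exact ⟨h0, fun S hS => h1 S (fun hc => hS ((aux_hc_iff hself hxy hnu S).1 hc))⟩

end AuxIC

/-- If `G` is critical, then for every edge of `G` that does
not belong to any unicycle of `G`, the MAIS outer bound is not tight for the
graph with that edge removed. -/
theorem mais_not_tight_of_critical_of_not_inUnicycle
    (n : ℕ) (hn : 1 ≤ n)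
    (E : Fin n → Fin n → Prop) (hE : ∀ i, ¬ E i i)
    (hcrit : ∀ x y, E x y →
      IC.capacityRegion (IC.removeEdge E x y) ≠ IC.capacityRegion E) :
    ∀ x y, E x y → ¬ IC.InUnicycle E x y →
      IC.maisRegion (IC.removeEdge E x y) ≠
        IC.capacityRegion (IC.removeEdge E x y) := by
  intro x y hxy hnu heq
  apply hcrit x y hxy
  apply Set.Subset.antisymm
  · exact aux_cap_mono (fun a b h => h.1)
  · calc IC.capacityRegion E ⊆ IC.maisRegion E := aux_cap_sub_mais hE
      _ = IC.maisRegion (IC.removeEdge E x y) := (aux_mais_eq hE hxy hnu).symm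
      _ = IC.capacityRegion (IC.removeEdge E x y) := heq
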